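/- Suppose the warped product M₁ ×_f M₂ (with dim M₂ = k) admits a second Ricci soliton structure with potential field W = W₁ + W₂ (W_i tangent to M_i) and constant λ. Then on M₁: 𝓛_{W₁}𝓛_{W₁}g₁ + Ric₁ − (k/f) Hess₁ f = λ g₁. Moreover, (M₁, g₁, W₁, λ) is itself a second Ricci soliton if and only if Hess₁ f = 0. -/

import Mathlib

/-!
STATEMENT 15. Suppose the warped product `M₁ ×_f M₂` (with `dim M₂ = k`,
metric `g = g₁ + f²g₂`) admits a second Ricci soliton structure
(`𝓛_W𝓛_W g + Ric = λ g`) with potential field `W = W₁ + W₂` (`Wᵢ` tangent to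
`Mᵢ`) and constant `λ`.  Then on `M₁`:
`𝓛_{W₁}𝓛_{W₁}g₁ + Ric₁ − (k/f) Hess₁ f = λ g₁`.
Moreover, `(M₁, g₁, W₁, λ)` is itself a second Ricci soliton if and only if
`Hess₁ f = 0`.

One uses the warped-product formulas
`Ric(U₁,V₁) = Ric₁(U₁,V₁) − (k/f) Hess₁f(U₁,V₁)`,
`Ric(U₂,V₂) = Ric₂(U₂,V₂) − (Δf/f + (k−1)⟨∇f,∇f⟩/f²) g₂(U₂,V₂)`,
and the decomposition
`(𝓛_W𝓛_W g)(U,V) = (𝓛_{W₁}𝓛_{W₁}g₁)(U₁,V₁) + f²(𝓛_{W₂}𝓛_{W₂}g₂)(U₂,V₂)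
  + 2W₁(f²)(𝓛_{W₂}g₂)(U₂,V₂) + W₁(W₁(f²)) g₂(U₂,V₂)`.
-/

open Manifold

noncomputable section

theorem warped_product_second_soliton_base_equation
    -- the base (M₁, g₁)
    {E₁ : Type*} [NormedAddCommGroup E₁] [NormedSpace ℝ E₁]
    {H₁ : Type*} [TopologicalSpace H₁] {I₁ : ModelWithCorners ℝ E₁ H₁}
    {M₁ : Type*} [TopologicalSpace M₁] [ChartedSpace H₁ M₁]
    [IsManifold I₁ (⊤ : ℕ∞) M₁]
    -- the fibre (M₂, g₂), of dimension `k`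
    {E₂ : Type*} [NormedAddCommGroup E₂] [NormedSpace ℝ E₂]
    [FiniteDimensional ℝ E₂]
    {H₂ : Type*} [TopologicalSpace H₂] {I₂ : ModelWithCorners ℝ E₂ H₂}
    {M₂ : Type*} [TopologicalSpace M₂] [ChartedSpace H₂ M₂]
    [IsManifold I₂ (⊤ : ℕ∞) M₂] [Nonempty M₂]
    (k : ℕ) (hk : 0 < k) (hk_dim : Module.finrank ℝ E₂ = k)
    -- the warping function `f : M₁ → ℝ⁺`
    (f : M₁ → ℝ) (hf_pos : ∀ x, 0 < f x) (hf : ContMDiff I₁ 𝓘(ℝ, ℝ) (⊤ : ℕ∞) f)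
    -- tensors on `M₁`: metric, Ricci curvature, `𝓛_{W₁}𝓛_{W₁}g₁`, `Hess₁ f`
    (g₁ Ric₁ LL₁ Hess1f : ∀ x : M₁, TangentSpace I₁ x → TangentSpace I₁ x → ℝ)
    -- tensors on `M₂`: metric, Ricci curvature, `𝓛_{W₂}g₂`, `𝓛_{W₂}𝓛_{W₂}g₂`
    (g₂ Ric₂ LWg₂ LL₂ : ∀ y : M₂, TangentSpace I₂ y → TangentSpace I₂ y → ℝ)
    -- `Wᵢ` tangent to `Mᵢ`
    (W₁ : ∀ x : M₁, TangentSpace I₁ x) (W₂ : ∀ y : M₂, TangentSpace I₂ y)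
    -- `W₁(f²)`, `W₁(W₁(f²))`, `Δf` and `⟨∇f, ∇f⟩` on `(M₁, g₁)`
    (W1f2 W1W1f2 lapf gradfSq : M₁ → ℝ)
    (hW1f2 : ∀ x, W1f2 x =
      (show ℝ from mfderiv I₁ 𝓘(ℝ, ℝ) (fun y => (f y) ^ 2) x (W₁ x)))
    (hW1W1f2 : ∀ x, W1W1f2 x =
      (show ℝ from mfderiv I₁ 𝓘(ℝ, ℝ) W1f2 x (W₁ x)))
    -- the tensors on `M₂` vanish on zero vectors (bilinearity)
    (hLL₂_zero : ∀ y : M₂, LL₂ y 0 0 = 0)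
    (hLWg₂_zero : ∀ y : M₂, LWg₂ y 0 0 = 0)
    (hg₂_zero : ∀ y : M₂, g₂ y 0 0 = 0)
    (hRic₂_zero : ∀ y : M₂, Ric₂ y 0 0 = 0)
    (lambda : ℝ)
    -- the second Ricci soliton equation `𝓛_W𝓛_W g + Ric = λ g` on `M₁ ×_f M₂`,
    -- written through the warped-product decompositions of `𝓛_W𝓛_W g` and `Ric`
    (hsoliton : ∀ (x : M₁) (y : M₂) (u₁ v₁ : TangentSpace I₁ x)
      (u₂ v₂ : TangentSpace I₂ y),
      (LL₁ x u₁ v₁ + (f x) ^ 2 * LL₂ y u₂ v₂ + 2 * W1f2 x * LWg₂ y u₂ v₂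
          + W1W1f2 x * g₂ y u₂ v₂)
        + ((Ric₁ x u₁ v₁ - ((k : ℝ) / f x) * Hess1f x u₁ v₁)
          + (Ric₂ y u₂ v₂ - (lapf x / f x + ((k : ℝ) - 1) * gradfSq x / (f x) ^ 2)
              * g₂ y u₂ v₂))
        = lambda * (g₁ x u₁ v₁ + (f x) ^ 2 * g₂ y u₂ v₂)) :
    -- (i) the induced equation on the base `M₁`
    (∀ (x : M₁) (u v : TangentSpace I₁ x),
      LL₁ x u v + Ric₁ x u v - ((k : ℝ) / f x) * Hess1f x u v
        = lambda * g₁ x u v) ∧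
    -- (ii) `(M₁, g₁, W₁, λ)` is a second Ricci soliton iff `Hess₁ f = 0`
    ((∀ (x : M₁) (u v : TangentSpace I₁ x),
        LL₁ x u v + Ric₁ x u v = lambda * g₁ x u v) ↔
      ∀ (x : M₁) (u v : TangentSpace I₁ x), Hess1f x u v = 0) := by
  obtain ⟨y⟩ := ‹Nonempty M₂›
  have base : ∀ (x : M₁) (u v : TangentSpace I₁ x),
      LL₁ x u v + Ric₁ x u v - ((k : ℝ) / f x) * Hess1f x u v
        = lambda * g₁ x u v := by
    intro x u v
    have h := hsoliton x y u v 0 0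
    rw [hLL₂_zero y, hLWg₂_zero y, hg₂_zero y, hRic₂_zero y] at h
    linarith
  refine ⟨base, ?_⟩
  constructor
  · intro hsol x u v
    have h1 := base x u v
    have h2 := hsol x u v
    have hfne : ((k : ℝ) / f x) ≠ 0 := by
      have := hf_pos x
      positivity
    have : ((k : ℝ) / f x) * Hess1f x u v = 0 := by linarith
    exact (mul_eq_zero.mp this).resolve_left hfne
  · intro hHess x u v
    have h1 := base x u v
    rw [hHess x u v] at h1
    linarith
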